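/- Let (α_1, …, α_r) and (β_1, …, β_m) be tuples of positive integers with r ≥ 1, m ≥ 1 and α_r ≥ 2. Then Z_U(α_1, …, α_r; β_1, …, β_m) = Z_B(α_1, …, α_r; β_1, …, β_m) + Z_B(β_1, α_1, …, α_r; β_2, …, β_m). -/

import Mathlib

open scoped BigOperators

/-- The multiple zeta value `ζ(a₁, …, a_r)`, as a sum over strictly increasing
tuples of positive integers. -/
noncomputable def mz (a : List ℕ) : ℝ :=
  ∑' k : {k : Fin a.length → ℕ+ // StrictMono k},
    ∏ i, (1 : ℝ) / ((k.1 i : ℕ) : ℝ) ^ a.get i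

/-- The multiple zeta-star value `ζ⋆(a₁, …, a_r)`, as a sum over weakly increasing
tuples of positive integers. -/
noncomputable def mzs (a : List ℕ) : ℝ :=
  ∑' k : {k : Fin a.length → ℕ+ // Monotone k},
    ∏ i, (1 : ℝ) / ((k.1 i : ℕ) : ℝ) ^ a.get i

/-- `Z_U(α; β)`: sum over `1 ≤ k₁ < ⋯ < k_r` and `1 ≤ ℓ₁ ≤ ⋯ ≤ ℓ_m ≤ k_r` of
`k₁^{-α₁} ⋯ k_r^{-α_r} ℓ₁^{-β₁} ⋯ ℓ_m^{-β_m}` (the `ℓ`-sum is `1` when `m = 0`). -/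
noncomputable def ZU (a b : List ℕ) : ℝ :=
  ∑' p : {p : (Fin a.length → ℕ+) × (Fin b.length → ℕ+) //
      StrictMono p.1 ∧ Monotone p.2 ∧
      ∀ (i : Fin a.length) (j : Fin b.length), i.1 = a.length - 1 → p.2 j ≤ p.1 i},
    (∏ i, (1 : ℝ) / ((p.1.1 i : ℕ) : ℝ) ^ a.get i) *
      ∏ j, (1 : ℝ) / ((p.1.2 j : ℕ) : ℝ) ^ b.get j

/-- `Z_L(α; β)`: sum over `1 ≤ k₁ < ⋯ < k_r` and `k₁ ≤ ℓ₁ ≤ ⋯ ≤ ℓ_m` of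
`k₁^{-α₁} ⋯ k_r^{-α_r} ℓ₁^{-β₁} ⋯ ℓ_m^{-β_m}` (the `ℓ`-sum is `1` when `m = 0`). -/
noncomputable def ZL (a b : List ℕ) : ℝ :=
  ∑' p : {p : (Fin a.length → ℕ+) × (Fin b.length → ℕ+) //
      StrictMono p.1 ∧ Monotone p.2 ∧
      ∀ (i : Fin a.length) (j : Fin b.length), i.1 = 0 → p.1 i ≤ p.2 j},
    (∏ i, (1 : ℝ) / ((p.1.1 i : ℕ) : ℝ) ^ a.get i) *
      ∏ j, (1 : ℝ) / ((p.1.2 j : ℕ) : ℝ) ^ b.get j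

/-- `Z_B(α; β)`: sum over `1 ≤ k₁ < ⋯ < k_r` and `k₁ ≤ ℓ₁ ≤ ⋯ ≤ ℓ_m ≤ k_r` of
`k₁^{-α₁} ⋯ k_r^{-α_r} ℓ₁^{-β₁} ⋯ ℓ_m^{-β_m}` (the `ℓ`-sum is `1` when `m = 0`). -/
noncomputable def ZB (a b : List ℕ) : ℝ :=
  ∑' p : {p : (Fin a.length → ℕ+) × (Fin b.length → ℕ+) //
      StrictMono p.1 ∧ Monotone p.2 ∧
      (∀ (i : Fin a.length) (j : Fin b.length), i.1 = 0 → p.1 i ≤ p.2 j) ∧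
      ∀ (i : Fin a.length) (j : Fin b.length), i.1 = a.length - 1 → p.2 j ≤ p.1 i},
    (∏ i, (1 : ℝ) / ((p.1.1 i : ℕ) : ℝ) ^ a.get i) *
      ∏ j, (1 : ℝ) / ((p.1.2 j : ℕ) : ℝ) ^ b.get j

/-! ### Auxiliary lemmas -/

section Aux

open Real

/-- Splitting a `tsum` over a sum type. -/
lemma my_tsum_sum_type {α β : Type*} (f : α ⊕ β → ℝ)
    (h1 : Summable fun a => f (Sum.inl a)) (h2 : Summable fun b => f (Sum.inr b)) :
    ∑' x, f x = (∑' a, f (Sum.inl a)) + ∑' b, f (Sum.inr b) := by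
  have e1 : HasSum (f ∘ ((↑) : Set.range (Sum.inl : α → α ⊕ β) → α ⊕ β))
      (∑' a, f (Sum.inl a)) :=
    ((Equiv.ofInjective (Sum.inl : α → α ⊕ β) Sum.inl_injective).hasSum_iff).mp h1.hasSum
  have e2 : HasSum (f ∘ ((↑) : Set.range (Sum.inr : β → α ⊕ β) → α ⊕ β))
      (∑' b, f (Sum.inr b)) :=
    ((Equiv.ofInjective (Sum.inr : β → α ⊕ β) Sum.inr_injective).hasSum_iff).mp h2.hasSum
  exact (HasSum.add_isCompl Set.isCompl_range_inl_range_inr e1 e2).tsum_eq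

lemma my_summable_pi_prod {g : ℕ+ → ℝ} (hg : Summable g) (hg0 : ∀ x, 0 ≤ g x)
    (n : ℕ) : Summable (fun k : Fin n → ℕ+ => ∏ i, g (k i)) := by
  induction n with
  | zero =>
      have h : (fun k : Fin 0 → ℕ+ => ∏ i, g (k i)) = fun _ => 1 := by
        funext k; simp
      rw [h]
      haveI : Unique (Fin 0 → ℕ+) := ⟨⟨fun i => i.elim0⟩, fun f => funext fun i => i.elim0⟩
      haveI : Fintype (Fin 0 → ℕ+) := Fintype.ofSubsingleton (fun i => i.elim0)
      exact (hasSum_fintype _).summable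
  | succ n ih =>
      have h2 : Summable (fun p : ℕ+ × (Fin n → ℕ+) => g p.1 * ∏ i, g (p.2 i)) :=
        Summable.mul_of_nonneg (f := g) (g := fun k : Fin n → ℕ+ => ∏ i, g (k i)) hg ih (fun x => hg0 x)
          (fun k => Finset.prod_nonneg fun i _ => hg0 _)
      refine (Equiv.summable_iff (Fin.consEquiv (fun _ : Fin (n + 1) => ℕ+))).mp ?_
      refine h2.congr fun p => ?_
      simp only [Function.comp_apply, Fin.consEquiv_apply]
      rw [Fin.prod_univ_succ]
      simp

lemma my_strictMono_cons {n : ℕ} {x : ℕ+} {k : Fin n → ℕ+} (hk : StrictMono k)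
    (hx : ∀ i, x < k i) : StrictMono (Fin.cons x k : Fin (n + 1) → ℕ+) := by
  intro i j hij
  induction j using Fin.cases with
  | zero => exact absurd hij (by simp)
  | succ j' =>
    induction i using Fin.cases with
    | zero => simpa using hx j'
    | succ i' =>
      simp only [Fin.cons_succ]
      exact hk (by rwa [Fin.succ_lt_succ_iff] at hij)

lemma my_monotone_cons {n : ℕ} {x : ℕ+} {k : Fin n → ℕ+} (hk : Monotone k)
    (hx : ∀ i, x ≤ k i) : Monotone (Fin.cons x k : Fin (n + 1) → ℕ+) := by
  intro i j hij
  induction j using Fin.cases with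
  | zero =>
    have h0 : i = 0 := le_antisymm hij (Fin.zero_le i)
    rw [h0]
  | succ j' =>
    induction i using Fin.cases with
    | zero => simpa using hx j'
    | succ i' =>
      simp only [Fin.cons_succ]
      exact hk (by rwa [Fin.succ_le_succ_iff] at hij)

lemma my_summable_term {r' M : ℕ} (a : Fin (r' + 1) → ℕ) (b : Fin M → ℕ)
    (hapos : ∀ i, 1 ≤ a i) (hbpos : ∀ j, 1 ≤ b j) (har : 2 ≤ a (Fin.last r'))
    (P : (Fin (r' + 1) → ℕ+) × (Fin M → ℕ+) → Prop)
    (hP : ∀ p, P p → Monotone p.1 ∧ ∀ j, p.2 j ≤ p.1 (Fin.last r')) :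
    Summable (fun p : {p // P p} =>
      (∏ i, (1 : ℝ) / ((p.1.1 i : ℕ) : ℝ) ^ a i) *
        ∏ j, (1 : ℝ) / ((p.1.2 j : ℕ) : ℝ) ^ b j) := by
  set ε : ℝ := 1 / (r' + M + 1) with hε
  have hεpos : 0 < ε := by positivity
  set g : ℕ+ → ℝ := fun x => ((x : ℕ) : ℝ) ^ (-(1 + ε)) with hgdef
  have hg0 : ∀ x, 0 ≤ g x := fun x => Real.rpow_nonneg (by positivity) _
  have hgsum : Summable g := by
    have h1 : Summable (fun n : ℕ => (n : ℝ) ^ (-(1 + ε))) :=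
      Real.summable_nat_rpow.mpr (by linarith)
    exact h1.comp_injective (fun x y h => PNat.coe_injective h)
  have hA := my_summable_pi_prod hgsum hg0 (r' + 1)
  have hB := my_summable_pi_prod hgsum hg0 M
  have hbig : Summable (fun p : (Fin (r' + 1) → ℕ+) × (Fin M → ℕ+) =>
      (∏ i, g (p.1 i)) * ∏ j, g (p.2 j)) :=
    Summable.mul_of_nonneg (f := fun k : Fin (r' + 1) → ℕ+ => ∏ i, g (k i))
      (g := fun l : Fin M → ℕ+ => ∏ j, g (l j)) hA hB
      (fun k => Finset.prod_nonneg fun i _ => hg0 _)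
      (fun l => Finset.prod_nonneg fun j _ => hg0 _)
  have hres : Summable (fun p : {p // P p} => (∏ i, g (p.1.1 i)) * ∏ j, g (p.1.2 j)) :=
    hbig.comp_injective Subtype.val_injective
  refine Summable.of_nonneg_of_le (fun p => ?_) (fun p => ?_) hres
  · apply mul_nonneg <;> exact Finset.prod_nonneg fun _ _ => by positivity
  · obtain ⟨⟨k, l⟩, hp⟩ := p
    obtain ⟨hmono, hle⟩ := hP _ hp
    set n : ℝ := ((k (Fin.last r') : ℕ) : ℝ) with hn
    have hn1 : (1 : ℝ) ≤ n := by rw [hn]; exact_mod_cast (k (Fin.last r')).one_le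
    have hn0 : (0 : ℝ) < n := by linarith
    have key1 : ∀ (x : ℕ+) (c : ℕ), 1 ≤ c → x ≤ k (Fin.last r') →
        (1 : ℝ) / ((x : ℕ) : ℝ) ^ c ≤ n ^ ε * g x := by
      intro x c hc hxn
      have hx1 : (1 : ℝ) ≤ ((x : ℕ) : ℝ) := by exact_mod_cast x.one_le
      have hx0 : (0 : ℝ) < ((x : ℕ) : ℝ) := by linarith
      have hxn' : ((x : ℕ) : ℝ) ≤ n := by rw [hn]; exact_mod_cast hxn
      have e1 : (1 : ℝ) / ((x : ℕ) : ℝ) ^ c = ((x : ℕ) : ℝ) ^ (-(c : ℝ)) := by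
        rw [Real.rpow_neg hx0.le, Real.rpow_natCast, one_div]
      rw [e1]
      calc ((x : ℕ) : ℝ) ^ (-(c : ℝ)) ≤ ((x : ℕ) : ℝ) ^ (-1 : ℝ) := by
            apply Real.rpow_le_rpow_of_exponent_le hx1
            have : (1 : ℝ) ≤ (c : ℝ) := by exact_mod_cast hc
            linarith
        _ = ((x : ℕ) : ℝ) ^ ε * ((x : ℕ) : ℝ) ^ (-(1 + ε)) := by
            rw [← Real.rpow_add hx0]; ring_nf
        _ ≤ n ^ ε * g x := by
            rw [hgdef]
            exact mul_le_mul_of_nonneg_right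
              (Real.rpow_le_rpow hx0.le hxn' hεpos.le) (Real.rpow_nonneg hx0.le _)
    have key2 : (1 : ℝ) / n ^ (a (Fin.last r')) ≤ n ^ (-2 : ℝ) := by
      have e1 : (1 : ℝ) / n ^ (a (Fin.last r')) = n ^ (-(a (Fin.last r') : ℝ)) := by
        rw [Real.rpow_neg hn0.le, Real.rpow_natCast, one_div]
      rw [e1]
      apply Real.rpow_le_rpow_of_exponent_le hn1
      have : (2 : ℝ) ≤ (a (Fin.last r') : ℝ) := by exact_mod_cast har
      linarith
    calc (∏ i, (1 : ℝ) / ((k i : ℕ) : ℝ) ^ a i) * ∏ j, (1 : ℝ) / ((l j : ℕ) : ℝ) ^ b j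
        = ((∏ i : Fin r', (1 : ℝ) / ((k i.castSucc : ℕ) : ℝ) ^ a i.castSucc) *
            ((1 : ℝ) / n ^ (a (Fin.last r')))) *
            ∏ j, (1 : ℝ) / ((l j : ℕ) : ℝ) ^ b j := by
          rw [Fin.prod_univ_castSucc]
      _ ≤ ((∏ i : Fin r', (n ^ ε * g (k i.castSucc))) * n ^ (-2 : ℝ)) *
            ∏ j, (n ^ ε * g (l j)) := by
          apply mul_le_mul
          · apply mul_le_mul
            · apply Finset.prod_le_prod (fun i _ => by positivity)
              exact fun i _ => key1 (k i.castSucc) (a i.castSucc) (hapos _)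
                (hmono (Fin.le_last _))
            · exact key2
            · positivity
            · exact Finset.prod_nonneg fun i _ => by positivity
          · apply Finset.prod_le_prod (fun j _ => by positivity)
            exact fun j _ => key1 (l j) (b j) (hbpos _) (hle j)
          · exact Finset.prod_nonneg fun j _ => by positivity
          · apply mul_nonneg (Finset.prod_nonneg fun i _ => by positivity)
            positivity
      _ = ((n ^ ε) ^ (r' : ℕ) * (n ^ ε) ^ (M : ℕ) * n ^ (-2 : ℝ)) *
            ((∏ i : Fin r', g (k i.castSucc)) * ∏ j, g (l j)) := by
          simp only [Finset.prod_mul_distrib, Finset.prod_const, Finset.card_univ,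
            Fintype.card_fin]
          ring
      _ ≤ n ^ (-(1 + ε)) * ((∏ i : Fin r', g (k i.castSucc)) * ∏ j, g (l j)) := by
          apply mul_le_mul_of_nonneg_right _
            (mul_nonneg (Finset.prod_nonneg fun i _ => hg0 _)
              (Finset.prod_nonneg fun j _ => hg0 _))
          have h1 : (n ^ ε) ^ (r' : ℕ) * (n ^ ε) ^ (M : ℕ) * n ^ (-2 : ℝ) =
              n ^ (ε * r' + ε * M + (-2)) := by
            rw [← Real.rpow_natCast (n ^ ε) r', ← Real.rpow_natCast (n ^ ε) M,
              ← Real.rpow_mul hn0.le, ← Real.rpow_mul hn0.le,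
              ← Real.rpow_add hn0, ← Real.rpow_add hn0]
          rw [h1]
          apply Real.rpow_le_rpow_of_exponent_le hn1
          have hε1 : ε * ((r' : ℝ) + M + 1) = 1 := by
            rw [hε]; field_simp
          nlinarith [hε1]
      _ = (∏ i, g (k i)) * ∏ j, g (l j) := by
          rw [Fin.prod_univ_castSucc (f := fun i => g (k i))]
          have h2 : g (k (Fin.last r')) = n ^ (-(1 + ε)) := rfl
          rw [h2]; ring

def mySplitEquiv (r' m' : ℕ) :
    ({p : (Fin (r' + 1) → ℕ+) × (Fin (m' + 1) → ℕ+) //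
        StrictMono p.1 ∧ Monotone p.2 ∧
        (∀ i j, i.1 = 0 → p.1 i ≤ p.2 j) ∧
        (∀ i j, i.1 = r' + 1 - 1 → p.2 j ≤ p.1 i)} ⊕
     {p : (Fin (r' + 2) → ℕ+) × (Fin m' → ℕ+) //
        StrictMono p.1 ∧ Monotone p.2 ∧
        (∀ i j, i.1 = 0 → p.1 i ≤ p.2 j) ∧
        (∀ i j, i.1 = r' + 2 - 1 → p.2 j ≤ p.1 i)}) ≃
    {p : (Fin (r' + 1) → ℕ+) × (Fin (m' + 1) → ℕ+) //
        StrictMono p.1 ∧ Monotone p.2 ∧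
        (∀ i j, i.1 = r' + 1 - 1 → p.2 j ≤ p.1 i)} where
  toFun := Sum.elim
    (fun q => ⟨q.1, q.2.1, q.2.2.1, q.2.2.2.2⟩)
    (fun q => ⟨(q.1.1 ∘ Fin.succ, Fin.cons (q.1.1 0) q.1.2), by
      obtain ⟨⟨k, l⟩, hp⟩ := q
      refine ⟨fun i j hij => hp.1 (Fin.succ_lt_succ_iff.mpr hij),
        my_monotone_cons hp.2.1 (fun j => hp.2.2.1 0 j rfl), fun i j hi => ?_⟩
      have hi' : i = Fin.last r' := Fin.ext hi
      subst hi'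
      induction j using Fin.cases with
      | zero =>
        simp only [Fin.cons_zero, Function.comp_apply]
        exact hp.1.monotone (Fin.zero_le _)
      | succ j' =>
        simp only [Fin.cons_succ, Function.comp_apply]
        exact hp.2.2.2 (Fin.succ (Fin.last r')) j' rfl⟩)
  invFun p :=
    if hc : p.1.1 0 ≤ p.1.2 0 then
      .inl ⟨p.1, p.2.1, p.2.2.1, fun i j hi => by
        have hi' : i = 0 := Fin.ext hi
        subst hi'
        exact hc.trans (p.2.2.1 (Fin.zero_le j)), p.2.2.2⟩
    else
      .inr ⟨(Fin.cons (p.1.2 0) p.1.1, p.1.2 ∘ Fin.succ), by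
        have hc' : p.1.2 0 < p.1.1 0 := lt_of_not_ge hc
        refine ⟨my_strictMono_cons p.2.1
            (fun i => lt_of_lt_of_le hc' (p.2.1.monotone (Fin.zero_le i))),
          fun i j hij => p.2.2.1 (Fin.succ_le_succ_iff.mpr hij),
          fun i j hi => ?_, fun i j hi => ?_⟩
        · have hi' : i = 0 := Fin.ext hi
          subst hi'
          simp only [Fin.cons_zero, Function.comp_apply]
          exact p.2.2.1 (Fin.zero_le _)
        · have hi' : i = Fin.succ (Fin.last r') := Fin.ext hi
          subst hi'
          simp only [Fin.cons_succ, Function.comp_apply]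
          exact p.2.2.2 (Fin.last r') (Fin.succ j) rfl⟩
  left_inv x := by
    cases x with
    | inl q =>
      dsimp only [Sum.elim_inl]
      rw [dif_pos (q.2.2.2.1 0 0 rfl)]
    | inr q =>
      dsimp only [Sum.elim_inr]
      have hlt : (Fin.cons (q.1.1 0) q.1.2 : Fin (m' + 1) → ℕ+) 0 < (q.1.1 ∘ Fin.succ) 0 := by
        simp only [Fin.cons_zero, Function.comp_apply]
        exact q.2.1 (Fin.succ_pos 0)
      rw [dif_neg (not_le.mpr hlt)]
      refine congrArg Sum.inr (Subtype.ext ?_)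
      refine Prod.ext ?_ ?_
      · show Fin.cons ((Fin.cons (q.1.1 0) q.1.2 : Fin (m' + 1) → ℕ+) 0) (q.1.1 ∘ Fin.succ)
          = q.1.1
        rw [Fin.cons_zero]
        exact Fin.cons_self_tail q.1.1
      · show (Fin.cons (q.1.1 0) q.1.2 : Fin (m' + 1) → ℕ+) ∘ Fin.succ = q.1.2
        funext j
        exact Fin.cons_succ _ _ _
  right_inv p := by
    by_cases hc : p.1.1 0 ≤ p.1.2 0
    · simp only [dif_pos hc, Sum.elim_inl]
    · simp only [dif_neg hc, Sum.elim_inr]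
      refine Subtype.ext ?_
      refine Prod.ext ?_ ?_
      · show (Fin.cons (p.1.2 0) p.1.1 : Fin (r' + 2) → ℕ+) ∘ Fin.succ = p.1.1
        funext i
        exact Fin.cons_succ _ _ _
      · show Fin.cons ((Fin.cons (p.1.2 0) p.1.1 : Fin (r' + 2) → ℕ+) 0) (p.1.2 ∘ Fin.succ)
          = p.1.2
        rw [Fin.cons_zero]
        exact Fin.cons_self_tail p.1.2

/-- Reindexing `ZU` along length equalities. -/
lemma my_ZU_reindex (l lb : List ℕ) {R M : ℕ} (h1 : l.length = R) (h2 : lb.length = M)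
    (a : Fin R → ℕ) (b : Fin M → ℕ)
    (ha : ∀ i : Fin l.length, l.get i = a (Fin.cast h1 i))
    (hb : ∀ j : Fin lb.length, lb.get j = b (Fin.cast h2 j)) :
    ZU l lb = ∑' p : {p : (Fin R → ℕ+) × (Fin M → ℕ+) //
        StrictMono p.1 ∧ Monotone p.2 ∧ ∀ i j, i.1 = R - 1 → p.2 j ≤ p.1 i},
      (∏ i, (1 : ℝ) / ((p.1.1 i : ℕ) : ℝ) ^ a i) *
        ∏ j, (1 : ℝ) / ((p.1.2 j : ℕ) : ℝ) ^ b j := by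
  subst h1; subst h2
  unfold ZU
  refine tsum_congr fun p => ?_
  congr 1
  · refine Finset.prod_congr rfl fun i _ => ?_
    rw [ha i]
    congr 1
  · refine Finset.prod_congr rfl fun j _ => ?_
    rw [hb j]
    congr 1

/-- Reindexing `ZB` along length equalities. -/
lemma my_ZB_reindex (l lb : List ℕ) {R M : ℕ} (h1 : l.length = R) (h2 : lb.length = M)
    (a : Fin R → ℕ) (b : Fin M → ℕ)
    (ha : ∀ i : Fin l.length, l.get i = a (Fin.cast h1 i))
    (hb : ∀ j : Fin lb.length, lb.get j = b (Fin.cast h2 j)) :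
    ZB l lb = ∑' p : {p : (Fin R → ℕ+) × (Fin M → ℕ+) //
        StrictMono p.1 ∧ Monotone p.2 ∧
        (∀ i j, i.1 = 0 → p.1 i ≤ p.2 j) ∧
        (∀ i j, i.1 = R - 1 → p.2 j ≤ p.1 i)},
      (∏ i, (1 : ℝ) / ((p.1.1 i : ℕ) : ℝ) ^ a i) *
        ∏ j, (1 : ℝ) / ((p.1.2 j : ℕ) : ℝ) ^ b j := by
  subst h1; subst h2
  unfold ZB
  refine tsum_congr fun p => ?_
  congr 1
  · refine Finset.prod_congr rfl fun i _ => ?_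
    rw [ha i]
    congr 1
  · refine Finset.prod_congr rfl fun j _ => ?_
    rw [hb j]
    congr 1

/-- The main combinatorial splitting identity, in `Fin`-indexed form. -/
lemma my_key (r' m' : ℕ) (a : Fin (r' + 1) → ℕ) (b : Fin (m' + 1) → ℕ)
    (hapos : ∀ i, 1 ≤ a i) (hbpos : ∀ j, 1 ≤ b j) (har : 2 ≤ a (Fin.last r')) :
    (∑' p : {p : (Fin (r' + 1) → ℕ+) × (Fin (m' + 1) → ℕ+) //
        StrictMono p.1 ∧ Monotone p.2 ∧
        ∀ i j, i.1 = r' + 1 - 1 → p.2 j ≤ p.1 i},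
      (∏ i, (1 : ℝ) / ((p.1.1 i : ℕ) : ℝ) ^ a i) *
        ∏ j, (1 : ℝ) / ((p.1.2 j : ℕ) : ℝ) ^ b j) =
    (∑' p : {p : (Fin (r' + 1) → ℕ+) × (Fin (m' + 1) → ℕ+) //
        StrictMono p.1 ∧ Monotone p.2 ∧
        (∀ i j, i.1 = 0 → p.1 i ≤ p.2 j) ∧
        (∀ i j, i.1 = r' + 1 - 1 → p.2 j ≤ p.1 i)},
      (∏ i, (1 : ℝ) / ((p.1.1 i : ℕ) : ℝ) ^ a i) *
        ∏ j, (1 : ℝ) / ((p.1.2 j : ℕ) : ℝ) ^ b j) +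
    ∑' p : {p : (Fin (r' + 2) → ℕ+) × (Fin m' → ℕ+) //
        StrictMono p.1 ∧ Monotone p.2 ∧
        (∀ i j, i.1 = 0 → p.1 i ≤ p.2 j) ∧
        (∀ i j, i.1 = r' + 2 - 1 → p.2 j ≤ p.1 i)},
      (∏ i, (1 : ℝ) / ((p.1.1 i : ℕ) : ℝ) ^ (Fin.cons (b 0) a : Fin (r' + 2) → ℕ) i) *
        ∏ j, (1 : ℝ) / ((p.1.2 j : ℕ) : ℝ) ^ b (Fin.succ j) := by
  classical
  set e := mySplitEquiv r' m' with he
  set f : {p : (Fin (r' + 1) → ℕ+) × (Fin (m' + 1) → ℕ+) //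
        StrictMono p.1 ∧ Monotone p.2 ∧
        ∀ i j, i.1 = r' + 1 - 1 → p.2 j ≤ p.1 i} → ℝ :=
    fun p => (∏ i, (1 : ℝ) / ((p.1.1 i : ℕ) : ℝ) ^ a i) *
        ∏ j, (1 : ℝ) / ((p.1.2 j : ℕ) : ℝ) ^ b j with hf
  -- summability of the two halves
  have hsum1 : Summable (fun q => f (e (Sum.inl q))) := by
    have := my_summable_term a b hapos hbpos har
      (fun p => StrictMono p.1 ∧ Monotone p.2 ∧
        (∀ i j, i.1 = 0 → p.1 i ≤ p.2 j) ∧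
        (∀ i j, i.1 = r' + 1 - 1 → p.2 j ≤ p.1 i))
      (fun p hp => ⟨hp.1.monotone, fun j => hp.2.2.2 (Fin.last r') j rfl⟩)
    exact this.congr fun q => rfl
  have hsum2 : Summable (fun q => f (e (Sum.inr q))) := by
    have := my_summable_term (Fin.cons (b 0) a : Fin (r' + 2) → ℕ) (fun j => b (Fin.succ j))
      (fun i => by
        induction i using Fin.cases with
        | zero => simpa using hbpos 0
        | succ i' => simpa using hapos i')
      (fun j => hbpos _)
      (by
        have : Fin.last (r' + 1) = Fin.succ (Fin.last r') := rfl
        rw [this, Fin.cons_succ]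
        exact har)
      (fun p => StrictMono p.1 ∧ Monotone p.2 ∧
        (∀ i j, i.1 = 0 → p.1 i ≤ p.2 j) ∧
        (∀ i j, i.1 = r' + 2 - 1 → p.2 j ≤ p.1 i))
      (fun p hp => ⟨hp.1.monotone, fun j => hp.2.2.2 (Fin.last (r' + 1)) j rfl⟩)
    refine this.congr fun q => ?_
    obtain ⟨⟨k, l⟩, hq⟩ := q
    show _ = f (e (Sum.inr ⟨(k, l), hq⟩))
    rw [hf]
    show (∏ i, (1 : ℝ) / ((k i : ℕ) : ℝ) ^ (Fin.cons (b 0) a : Fin (r' + 2) → ℕ) i) *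
        (∏ j, (1 : ℝ) / ((l j : ℕ) : ℝ) ^ b (Fin.succ j)) =
      (∏ i, (1 : ℝ) / ((k (Fin.succ i) : ℕ) : ℝ) ^ a i) *
        ∏ j, (1 : ℝ) / (((Fin.cons (k 0) l : Fin (m' + 1) → ℕ+) j : ℕ) : ℝ) ^ b j
    rw [Fin.prod_univ_succ (f := fun i => (1 : ℝ) / ((k i : ℕ) : ℝ) ^
        (Fin.cons (b 0) a : Fin (r' + 2) → ℕ) i),
      Fin.prod_univ_succ (f := fun j => (1 : ℝ) /
        (((Fin.cons (k 0) l : Fin (m' + 1) → ℕ+) j : ℕ) : ℝ) ^ b j)]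
    simp only [Fin.cons_zero, Fin.cons_succ]
    ring
  rw [← Equiv.tsum_eq e f, my_tsum_sum_type (fun x => f (e x)) hsum1 hsum2]
  congr 1
  refine tsum_congr fun q => ?_
  obtain ⟨⟨k, l⟩, hq⟩ := q
  show f (e (Sum.inr ⟨(k, l), hq⟩)) = _
  rw [hf]
  show (∏ i, (1 : ℝ) / ((k (Fin.succ i) : ℕ) : ℝ) ^ a i) *
      (∏ j, (1 : ℝ) / (((Fin.cons (k 0) l : Fin (m' + 1) → ℕ+) j : ℕ) : ℝ) ^ b j) =
    (∏ i, (1 : ℝ) / ((k i : ℕ) : ℝ) ^ (Fin.cons (b 0) a : Fin (r' + 2) → ℕ) i) *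
      ∏ j, (1 : ℝ) / ((l j : ℕ) : ℝ) ^ b (Fin.succ j)
  rw [Fin.prod_univ_succ (f := fun i => (1 : ℝ) / ((k i : ℕ) : ℝ) ^
      (Fin.cons (b 0) a : Fin (r' + 2) → ℕ) i),
    Fin.prod_univ_succ (f := fun j => (1 : ℝ) /
      (((Fin.cons (k 0) l : Fin (m' + 1) → ℕ+) j : ℕ) : ℝ) ^ b j)]
  simp only [Fin.cons_zero, Fin.cons_succ]
  ring


end Aux

/-- For tuples of positive integers with `r, m ≥ 1` and `α_r ≥ 2`:
`Z_U(α₁,…,α_r; β₁,…,β_m) = Z_B(α₁,…,α_r; β₁,…,β_m) + Z_B(β₁,α₁,…,α_r; β₂,…,β_m)`. -/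
theorem ZU_eq_ZB_add_ZB (r m : ℕ) (hr : 1 ≤ r) (hm : 1 ≤ m)
    (a : Fin r → ℕ) (b : Fin m → ℕ)
    (hapos : ∀ i, 1 ≤ a i) (hbpos : ∀ j, 1 ≤ b j)
    (har : 2 ≤ a ⟨r - 1, by omega⟩) :
    ZU (List.ofFn a) (List.ofFn b) =
      ZB (List.ofFn a) (List.ofFn b) +
      ZB (List.ofFn (Fin.cons (b ⟨0, by omega⟩) a))
         (List.ofFn (fun j : Fin (m - 1) => b ⟨j.1 + 1, by have := j.isLt; omega⟩)) := by
  obtain ⟨r', rfl⟩ : ∃ r', r = r' + 1 := ⟨r - 1, by omega⟩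
  obtain ⟨m', rfl⟩ : ∃ m', m = m' + 1 := ⟨m - 1, by omega⟩
  rw [my_ZU_reindex (List.ofFn a) (List.ofFn b) (List.length_ofFn (f := a)) (List.length_ofFn (f := b)) a b
      (fun i => List.get_ofFn a i) (fun j => List.get_ofFn b j),
    my_ZB_reindex (List.ofFn a) (List.ofFn b) (List.length_ofFn (f := a)) (List.length_ofFn (f := b)) a b
      (fun i => List.get_ofFn a i) (fun j => List.get_ofFn b j),
    my_ZB_reindex (List.ofFn (Fin.cons (b ⟨0, by omega⟩) a))
      (List.ofFn (fun j : Fin (m' + 1 - 1) => b ⟨j.1 + 1, by have := j.isLt; omega⟩))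
      List.length_ofFn List.length_ofFn
      (Fin.cons (b 0) a : Fin (r' + 2) → ℕ) (fun j : Fin m' => b (Fin.succ j))
      (fun i => by
        rw [List.get_ofFn]
        exact congrArg (fun t => (Fin.cons (t) a : Fin (r' + 2) → ℕ) _) rfl)
      (fun j => by
        rw [List.get_ofFn]
        exact congrArg b (Fin.ext rfl))]
  exact my_key r' m' a b hapos hbpos har
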